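/- Let α ∈ (1,∞) with α ≠ 2 and let b > 0. Then ∫_0^∞ sin²(b ξ^{α/2})/ξ^α dξ = 2^{2(1−1/α)} · α^{−1} · cos(π/α) · Γ(2(1/α − 1)) · b^{2−2/α}. -/

import Mathlib

open Real MeasureTheory Set Filter Topology

lemma swap_eval {f : ℝ → ℝ → ℝ} {g₁ g₂ : ℝ → ℝ} {c : ℝ}
    (hf : Measurable (Function.uncurry f))
    (h0 : ∀ x ∈ Ioi (0:ℝ), ∀ t ∈ Ioi (0:ℝ), 0 ≤ f x t)
    (h1i : ∀ x ∈ Ioi (0:ℝ), IntegrableOn (f x) (Ioi 0))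
    (h1v : ∀ x ∈ Ioi (0:ℝ), ∫ t in Ioi (0:ℝ), f x t = g₁ x)
    (h2i : ∀ t ∈ Ioi (0:ℝ), IntegrableOn (fun x => f x t) (Ioi 0))
    (h2v : ∀ t ∈ Ioi (0:ℝ), ∫ x in Ioi (0:ℝ), f x t = g₂ t)
    (h3i : IntegrableOn g₂ (Ioi 0))
    (h3v : ∫ t in Ioi (0:ℝ), g₂ t = c) :
    IntegrableOn g₁ (Ioi 0) ∧ ∫ x in Ioi (0:ℝ), g₁ x = c := by
  have hae : ∀ᵐ x ∂(volume.restrict (Ioi (0:ℝ))), x ∈ Ioi (0:ℝ) :=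
    ae_restrict_mem measurableSet_Ioi
  have hg1nn : ∀ x ∈ Ioi (0:ℝ), 0 ≤ g₁ x := by
    intro x hx
    rw [← h1v x hx]
    exact setIntegral_nonneg measurableSet_Ioi (fun t ht => h0 x hx t ht)
  have hg2nn : ∀ t ∈ Ioi (0:ℝ), 0 ≤ g₂ t := by
    intro t ht
    rw [← h2v t ht]
    exact setIntegral_nonneg measurableSet_Ioi (fun x hx => h0 x hx t ht)
  have hswap : ∫⁻ x in Ioi (0:ℝ), ∫⁻ t in Ioi (0:ℝ), ENNReal.ofReal (f x t)
      = ∫⁻ t in Ioi (0:ℝ), ∫⁻ x in Ioi (0:ℝ), ENNReal.ofReal (f x t) :=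
    lintegral_lintegral_swap (ENNReal.measurable_ofReal.comp hf).aemeasurable
  have hL1 : ∫⁻ x in Ioi (0:ℝ), ∫⁻ t in Ioi (0:ℝ), ENNReal.ofReal (f x t)
      = ∫⁻ x in Ioi (0:ℝ), ENNReal.ofReal (g₁ x) := by
    refine lintegral_congr_ae ?_
    filter_upwards [hae] with x hx
    rw [← h1v x hx, ← ofReal_integral_eq_lintegral_ofReal (h1i x hx)]
    filter_upwards [hae] with t ht using h0 x hx t ht
  have hL2 : ∫⁻ t in Ioi (0:ℝ), ∫⁻ x in Ioi (0:ℝ), ENNReal.ofReal (f x t)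
      = ENNReal.ofReal c := by
    rw [← h3v, ofReal_integral_eq_lintegral_ofReal h3i
      (by filter_upwards [hae] with t ht using hg2nn t ht)]
    refine lintegral_congr_ae ?_
    filter_upwards [hae] with t ht
    rw [← h2v t ht, ← ofReal_integral_eq_lintegral_ofReal (h2i t ht)]
    filter_upwards [hae] with x hx using h0 x hx t ht
  have key : ∫⁻ x in Ioi (0:ℝ), ENNReal.ofReal (g₁ x) = ENNReal.ofReal c := by
    rw [← hL1, hswap, hL2]
  have hg1m : AEStronglyMeasurable g₁ (volume.restrict (Ioi (0:ℝ))) := by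
    have hm : StronglyMeasurable fun x => ∫ t in Ioi (0:ℝ), f x t :=
      (hf.stronglyMeasurable).integral_prod_right
    refine hm.aestronglyMeasurable.congr ?_
    filter_upwards [hae] with x hx using (h1v x hx)
  have hg1int : IntegrableOn g₁ (Ioi 0) := by
    refine ⟨hg1m, ?_⟩
    rw [hasFiniteIntegral_iff_norm]
    have : ∫⁻ x in Ioi (0:ℝ), ENNReal.ofReal ‖g₁ x‖
        = ∫⁻ x in Ioi (0:ℝ), ENNReal.ofReal (g₁ x) := by
      refine lintegral_congr_ae ?_
      filter_upwards [hae] with x hx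
      rw [Real.norm_eq_abs, abs_of_nonneg (hg1nn x hx)]
    rw [this, key]
    exact ENNReal.ofReal_lt_top
  refine ⟨hg1int, ?_⟩
  have hcnn : 0 ≤ c := by
    rw [← h3v]
    exact setIntegral_nonneg measurableSet_Ioi hg2nn
  have h := ofReal_integral_eq_lintegral_ofReal hg1int
    (by filter_upwards [hae] with x hx using hg1nn x hx)
  rw [key] at h
  exact (ENNReal.ofReal_eq_ofReal_iff (setIntegral_nonneg measurableSet_Ioi hg1nn) hcnn).mp h

lemma integrableOn_exp_neg_mul_cos {t : ℝ} (ht : 0 < t) :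
    IntegrableOn (fun x : ℝ => Real.exp (-(t*x)) * Real.cos x) (Ioi 0) := by
  refine (exp_neg_integrableOn_Ioi 0 ht).mono' ?_ ?_
  · exact ((Real.measurable_exp.comp ((measurable_id.const_mul t).neg)).mul
      (Real.measurable_cos)).aestronglyMeasurable
  · filter_upwards with x
    rw [norm_mul, norm_of_nonneg (Real.exp_pos _).le, neg_mul]
    calc Real.exp (-(t*x)) * ‖Real.cos x‖ ≤ Real.exp (-(t*x)) * 1 := by
          exact mul_le_mul_of_nonneg_left (by rw [Real.norm_eq_abs]; exact Real.abs_cos_le_one x)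
            (Real.exp_pos _).le
      _ = Real.exp (-(t*x)) := mul_one _

lemma laplace_cos {t : ℝ} (ht : 0 < t) :
    ∫ x in Ioi (0:ℝ), Real.exp (-(t*x)) * Real.cos x = t / (1 + t^2) := by
  have h1t : (0:ℝ) < 1 + t^2 := by positivity
  have hderiv : ∀ x ∈ Ici (0:ℝ), HasDerivAt
      (fun x => Real.exp (-(t*x)) * (Real.sin x - t * Real.cos x) / (1 + t^2))
      (Real.exp (-(t*x)) * Real.cos x) x := by
    intro x _
    have h1 : HasDerivAt (fun x => Real.exp (-(t*x))) (-t * Real.exp (-(t*x))) x := by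
      have := (Real.hasDerivAt_exp (-(t*x))).comp x
        (((hasDerivAt_id x).const_mul t).neg)
      simpa [mul_comm, Function.comp_def, Pi.neg_def] using this
    have h2 : HasDerivAt (fun x => Real.sin x - t * Real.cos x)
        (Real.cos x + t * Real.sin x) x := by
      simpa [mul_comm, sub_neg_eq_add, Pi.sub_def] using
        ((Real.hasDerivAt_sin x).sub ((Real.hasDerivAt_cos x).const_mul t))
    have := (h1.mul h2).div_const (1 + t^2)
    refine this.congr_deriv ?_
    field_simp
    ring
  have htop : Tendsto (fun x => Real.exp (-(t*x)) * (Real.sin x - t * Real.cos x) / (1 + t^2))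
      atTop (𝓝 0) := by
    have hexp : Tendsto (fun x : ℝ => Real.exp (-(t*x))) atTop (𝓝 0) := by
      rw [show (fun x : ℝ => Real.exp (-(t*x))) = fun x => Real.exp (-t * x) by
        funext x; ring_nf]
      exact tendsto_exp_atBot.comp (tendsto_id.const_mul_atTop_of_neg (neg_neg_iff_pos.mpr ht))
    have : Tendsto (fun x => Real.exp (-(t*x)) * (Real.sin x - t * Real.cos x)) atTop (𝓝 0) := by
      apply Tendsto.zero_mul_isBoundedUnder_le hexp
      refine isBoundedUnder_of ⟨1 + |t|, fun x => ?_⟩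
      calc ‖Real.sin x - t * Real.cos x‖ ≤ ‖Real.sin x‖ + ‖t * Real.cos x‖ := norm_sub_le _ _
        _ ≤ 1 + |t| := by
            rw [Real.norm_eq_abs, Real.norm_eq_abs, abs_mul]
            gcongr
            · exact Real.abs_sin_le_one x
            · calc |t| * |Real.cos x| ≤ |t| * 1 :=
                mul_le_mul_of_nonneg_left (Real.abs_cos_le_one x) (abs_nonneg t)
              _ = |t| := mul_one _
    simpa using this.div_const (1 + t^2)
  have := integral_Ioi_of_hasDerivAt_of_tendsto' hderiv (integrableOn_exp_neg_mul_cos ht) htop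
  rw [this]
  simp
  field_simp

lemma integral_exp_neg_mul' {t : ℝ} (ht : 0 < t) :
    ∫ x in Ioi (0:ℝ), Real.exp (-(t*x)) = t⁻¹ := by
  have h := integral_exp_neg_mul_rpow (p := 1) (b := t) one_pos ht
  have h2 : ∫ x in Ioi (0:ℝ), Real.exp (-(t*x)) = ∫ x in Ioi (0:ℝ), Real.exp (-t * x ^ (1:ℝ)) := by
    refine setIntegral_congr_fun measurableSet_Ioi (fun x hx => ?_)
    rw [Real.rpow_one, neg_mul]
  rw [h2, h, show (1:ℝ)/1 + 1 = 2 by norm_num, Real.Gamma_two,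
    show (-1:ℝ)/1 = -1 by norm_num, Real.rpow_neg_one, mul_one]

-- Laplace transform of (1 - cos)
lemma integrableOn_one_sub_cos_exp {t : ℝ} (ht : 0 < t) :
    IntegrableOn (fun x : ℝ => (1 - Real.cos x) * Real.exp (-(x*t))) (Ioi 0) := by
  refine ((exp_neg_integrableOn_Ioi 0 ht).const_mul 2).mono' ?_ ?_
  · exact ((measurable_const.sub Real.measurable_cos).mul
      (Real.measurable_exp.comp ((measurable_id.mul_const t).neg))).aestronglyMeasurable
  · filter_upwards with x
    rw [norm_mul, Real.norm_eq_abs, Real.norm_eq_abs, abs_of_nonneg (Real.exp_pos _).le]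
    have h1 : |1 - Real.cos x| ≤ 2 := by
      rw [abs_le]
      constructor <;> nlinarith [Real.neg_one_le_cos x, Real.cos_le_one x]
    calc |1 - Real.cos x| * Real.exp (-(x*t)) ≤ 2 * Real.exp (-(x*t)) :=
          mul_le_mul_of_nonneg_right h1 (Real.exp_pos _).le
      _ = 2 * Real.exp (-t * x) := by ring_nf

lemma laplace_one_sub_cos {t : ℝ} (ht : 0 < t) :
    ∫ x in Ioi (0:ℝ), (1 - Real.cos x) * Real.exp (-(x*t)) = t⁻¹ - t / (1 + t^2) := by
  have heq : ∀ x ∈ Ioi (0:ℝ), (1 - Real.cos x) * Real.exp (-(x*t))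
      = Real.exp (-(t*x)) - Real.exp (-(t*x)) * Real.cos x := by
    intro x _; rw [mul_comm x t]; ring
  rw [setIntegral_congr_fun measurableSet_Ioi heq,
    integral_sub ((exp_neg_integrableOn_Ioi 0 ht).congr_fun
      (fun x _ => by simp only [neg_mul]) measurableSet_Ioi) (integrableOn_exp_neg_mul_cos ht),
    integral_exp_neg_mul' ht, laplace_cos ht]

lemma K_eval {s : ℝ} (hs0 : 0 < s) (hs2 : s < 2) :
    IntegrableOn (fun t : ℝ => t ^ (s-1) * (1 + t^2)⁻¹) (Ioi 0) ∧
    ∫ t in Ioi (0:ℝ), t ^ (s-1) * (1 + t^2)⁻¹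
      = Real.Gamma (s/2) * Real.Gamma (1 - s/2) / 2 := by
  have h12 : 0 < 1 - s/2 := by linarith
  have hmain := swap_eval (f := fun t u => t ^ (s-1) * Real.exp (-((1+t^2)*u)))
    (g₁ := fun t => t ^ (s-1) * (1 + t^2)⁻¹)
    (g₂ := fun u => (Real.exp (-u) * u ^ (-s/2)) * (Real.Gamma (s/2) / 2))
    (c := Real.Gamma (s/2) * Real.Gamma (1 - s/2) / 2)
    ?_ ?_ ?_ ?_ ?_ ?_ ?_ ?_
  · exact hmain
  · -- measurability
    show Measurable (fun p : ℝ × ℝ => p.1 ^ (s-1) * Real.exp (-((1+p.1^2)*p.2)))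
    fun_prop
  · intro t ht u hu
    have ht' : (0:ℝ) < t := ht
    positivity
  · intro t ht
    have h1t : (0:ℝ) < 1 + t^2 := by positivity
    refine ((exp_neg_integrableOn_Ioi 0 h1t).congr_fun
      (fun u _ => by rw [neg_mul]) measurableSet_Ioi).const_mul _
  · intro t ht
    rw [integral_const_mul, integral_exp_neg_mul' (by positivity : (0:ℝ) < 1 + t^2)]
  · intro u hu
    have hu' : (0:ℝ) < u := hu
    have hbase := integrableOn_rpow_mul_exp_neg_mul_sq hu' (by linarith : (-1:ℝ) < s - 1)
    refine IntegrableOn.congr_fun (hbase.mul_const (Real.exp (-u))) (fun t _ => ?_) measurableSet_Ioi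
    rw [mul_assoc, ← Real.exp_add]
    congr 2
    ring
  · intro u hu
    have hu' : (0:ℝ) < u := hu
    have heq : ∀ t ∈ Ioi (0:ℝ), t ^ (s-1) * Real.exp (-((1+t^2)*u))
        = (t ^ (s-1) * Real.exp (-u * t^2)) * Real.exp (-u) := by
      intro t _
      rw [mul_assoc, ← Real.exp_add]
      congr 2
      ring
    rw [setIntegral_congr_fun measurableSet_Ioi heq, integral_mul_const]
    have h2 := integral_rpow_mul_exp_neg_mul_rpow (p := 2) (q := s-1) (b := u)
      two_pos (by linarith : (-1:ℝ) < s - 1) hu'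
    have h3 : ∫ t in Ioi (0:ℝ), t ^ (s-1) * Real.exp (-u * t^2)
        = ∫ t in Ioi (0:ℝ), t ^ (s-1) * Real.exp (-u * t ^ (2:ℝ)) := by
      refine setIntegral_congr_fun measurableSet_Ioi (fun t ht => ?_)
      rw [Real.rpow_two]
    rw [h3, h2, show (s-1+1)/2 = s/2 by ring, show -(s-1+1)/2 = -s/2 by ring]
    ring
  · have hbase := Real.GammaIntegral_convergent h12
    refine IntegrableOn.congr_fun (hbase.mul_const (Real.Gamma (s/2)/2)) (fun u _ => ?_) measurableSet_Ioi
    rw [show (1 - s/2) - 1 = -s/2 by ring]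
  · rw [integral_mul_const]
    have := Real.Gamma_eq_integral h12
    rw [show (1 - s/2) - 1 = -s/2 by ring] at this
    rw [← this]
    ring

lemma one_sub_cos_nonneg (x : ℝ) : 0 ≤ 1 - Real.cos x := by
  nlinarith [Real.cos_le_one x]

lemma I_eval {s : ℝ} (hs0 : 0 < s) (hs2 : s < 2) :
    ∫ x in Ioi (0:ℝ), (1 - Real.cos x) * x ^ (-(s+1))
      = Real.Gamma (s/2) * Real.Gamma (1 - s/2) / (2 * Real.Gamma (s+1)) := by
  have hG : 0 < Real.Gamma (s+1) := Real.Gamma_pos_of_pos (by linarith)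
  have hK := K_eval hs0 hs2
  have hmain := swap_eval
    (f := fun x t => (1 - Real.cos x) * (t ^ s * Real.exp (-(x*t))))
    (g₁ := fun x => ((1 - Real.cos x) * x ^ (-(s+1))) * Real.Gamma (s+1))
    (g₂ := fun t => t ^ s * (t⁻¹ - t / (1 + t^2)))
    (c := Real.Gamma (s/2) * Real.Gamma (1 - s/2) / 2)
    ?_ ?_ ?_ ?_ ?_ ?_ ?_ ?_
  · have h := hmain.2
    have h2 : ∫ x in Ioi (0:ℝ), ((1 - Real.cos x) * x ^ (-(s+1))) * Real.Gamma (s+1)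
        = (∫ x in Ioi (0:ℝ), (1 - Real.cos x) * x ^ (-(s+1))) * Real.Gamma (s+1) :=
      integral_mul_const _ _
    rw [h2] at h
    field_simp at h ⊢
    linarith [h]
  · show Measurable (fun p : ℝ × ℝ => (1 - Real.cos p.1) * (p.2 ^ s * Real.exp (-(p.1*p.2))))
    fun_prop
  · intro x hx t ht
    have ht' : (0:ℝ) < t := ht
    have := one_sub_cos_nonneg x
    positivity
  · intro x hx
    have hx' : (0:ℝ) < x := hx
    have hbase := integrableOn_rpow_mul_exp_neg_mul_rpow
      (p := 1) (s := s) (b := x) (by linarith : (-1:ℝ) < s) one_pos hx'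
    refine IntegrableOn.congr_fun (hbase.const_mul (1 - Real.cos x)) (fun t ht => ?_) measurableSet_Ioi
    rw [Real.rpow_one, neg_mul]
  · intro x hx
    have hx' : (0:ℝ) < x := hx
    have heq : ∀ t ∈ Ioi (0:ℝ), (1 - Real.cos x) * (t ^ s * Real.exp (-(x*t)))
        = (1 - Real.cos x) * (t ^ s * Real.exp (-x * t ^ (1:ℝ))) := by
      intro t ht
      rw [Real.rpow_one, neg_mul]
    rw [setIntegral_congr_fun measurableSet_Ioi heq, integral_const_mul,
      integral_rpow_mul_exp_neg_mul_rpow one_pos (by linarith : (-1:ℝ) < s) hx']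
    rw [show (s+1)/(1:ℝ) = s+1 by ring, show -(s+1)/(1:ℝ) = -(s+1) by ring]
    ring
  · intro t ht
    have ht' : (0:ℝ) < t := ht
    refine IntegrableOn.congr_fun ((integrableOn_one_sub_cos_exp ht').const_mul (t ^ s))
      (fun x hx => ?_) measurableSet_Ioi
    ring
  · intro t ht
    have ht' : (0:ℝ) < t := ht
    have heq : ∀ x ∈ Ioi (0:ℝ), (1 - Real.cos x) * (t ^ s * Real.exp (-(x*t)))
        = t ^ s * ((1 - Real.cos x) * Real.exp (-(x*t))) := by
      intro x hx; ring
    rw [setIntegral_congr_fun measurableSet_Ioi heq, integral_const_mul,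
      laplace_one_sub_cos ht']
  · refine IntegrableOn.congr_fun hK.1 (fun t ht => ?_) measurableSet_Ioi
    have ht' : (0:ℝ) < t := ht
    rw [Real.rpow_sub ht', Real.rpow_one]
    field_simp
    ring
  · have heq : ∀ t ∈ Ioi (0:ℝ), t ^ s * (t⁻¹ - t / (1 + t^2))
        = t ^ (s-1) * (1 + t^2)⁻¹ := by
      intro t ht
      have ht' : (0:ℝ) < t := ht
      have h1t : (0:ℝ) < 1 + t^2 := by positivity
      rw [Real.rpow_sub ht', Real.rpow_one]
      field_simp
      ring
    rw [setIntegral_congr_fun measurableSet_Ioi heq, hK.2]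

theorem integral_sin_sq_rpow
    (α b : ℝ) (hα : 1 < α) (hα2 : α ≠ 2) (hb : 0 < b) :
    ∫ ξ in Set.Ioi (0:ℝ), Real.sin (b * ξ ^ (α / 2)) ^ 2 / ξ ^ α =
      (2:ℝ) ^ (2 * (1 - 1 / α)) * α⁻¹ * Real.cos (π / α) *
        Real.Gamma (2 * (1 / α - 1)) * b ^ (2 - 2 / α) := by
  have hα0 : (0:ℝ) < α := by linarith
  set s : ℝ := 2 - 2/α with hs
  have hs0 : 0 < s := by
    rw [hs]
    have : 2/α < 2 := by
      rw [div_lt_iff₀ hα0]; nlinarith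
    linarith
  have hs2 : s < 2 := by
    rw [hs]
    have : 0 < 2/α := by positivity
    linarith
  set I : ℝ := ∫ x in Ioi (0:ℝ), (1 - Real.cos x) * x ^ (-(s+1)) with hI
  -- Step E : I = cos (π/α) * Γ (-s)
  have hsin_eq : Real.sin (π * (s/2)) = Real.sin (π/α) := by
    rw [show π * (s/2) = π - π/α by rw [hs]; ring, Real.sin_pi_sub]
  have hcos_eq : Real.cos (π * (s/2)) = -Real.cos (π/α) := by
    rw [show π * (s/2) = π - π/α by rw [hs]; ring, Real.cos_pi_sub]
  have hsinpos : 0 < Real.sin (π/α) :=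
    Real.sin_pos_of_pos_of_lt_pi (by positivity) (div_lt_self Real.pi_pos hα)
  have hcosne : Real.cos (π/α) ≠ 0 := by
    intro h
    rw [Real.cos_eq_zero_iff] at h
    obtain ⟨n, hn⟩ := h
    have hπ := Real.pi_pos
    have hb1 : 0 < π/α := by positivity
    have hb2 : π/α < π := div_lt_self Real.pi_pos hα
    rw [hn] at hb1 hb2
    have hn1 : (n:ℝ) < 1 := by nlinarith
    have hn2 : (-1:ℝ) < n := by nlinarith
    have hn0 : n = 0 := by
      have h1 : n < 1 := by exact_mod_cast hn1
      have h2 : -1 < n := by exact_mod_cast hn2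
      omega
    rw [hn0] at hn
    push_cast at hn
    have hpa : π/α = π/2 := by rw [hn]; ring
    rw [div_eq_div_iff hα0.ne' two_ne_zero] at hpa
    exact hα2 (by nlinarith [Real.pi_pos])
  have hsin2 : Real.sin (π * -s) = 2 * Real.sin (π/α) * Real.cos (π/α) := by
    rw [show π * -s = -(2 * (π * (s/2))) by ring, Real.sin_neg, Real.sin_two_mul,
      hsin_eq, hcos_eq]
    ring
  have hGs1 : 0 < Real.Gamma (s+1) := Real.Gamma_pos_of_pos (by linarith)
  have hsinne : Real.sin (π * -s) ≠ 0 := by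
    rw [hsin2]
    exact mul_ne_zero (mul_ne_zero two_ne_zero hsinpos.ne') hcosne
  have reflection2 : Real.Gamma (-s) * Real.Gamma (s+1) = π / Real.sin (π * -s) := by
    have := Real.Gamma_mul_Gamma_one_sub (-s)
    rwa [sub_neg_eq_add, add_comm 1 s] at this
  have hGneg : Real.Gamma (-s) = (π / Real.sin (π * -s)) / Real.Gamma (s+1) :=
    (eq_div_iff hGs1.ne').mpr reflection2
  have hIval : I = Real.cos (π/α) * Real.Gamma (-s) := by
    rw [hI, I_eval hs0 hs2, Real.Gamma_mul_Gamma_one_sub (s/2), hsin_eq, hGneg, hsin2]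
    field_simp
  -- Step A : substitution ξ = x ^ (2/α)
  have hp : (2/α) ≠ 0 := by positivity
  have stepA : (∫ ξ in Ioi (0:ℝ), Real.sin (b * ξ ^ (α / 2)) ^ 2 / ξ ^ α)
      = ∫ x in Ioi (0:ℝ), (2/α) * (Real.sin (b*x) ^ 2 * x ^ (-(s+1))) := by
    rw [← integral_comp_rpow_Ioi (fun ξ => Real.sin (b * ξ ^ (α / 2)) ^ 2 / ξ ^ α) hp]
    refine setIntegral_congr_fun measurableSet_Ioi (fun x hx => ?_)
    have hx' : (0:ℝ) < x := hx
    rw [smul_eq_mul, abs_of_pos (by positivity : (0:ℝ) < 2/α)]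
    rw [← Real.rpow_mul hx'.le, ← Real.rpow_mul hx'.le,
      show (2/α) * (α/2) = 1 by field_simp, Real.rpow_one,
      show (2/α) * α = 2 by field_simp]
    rw [show Real.sin (b*x)^2 / x ^ (2:ℝ) = Real.sin (b*x)^2 * x ^ (-(2:ℝ)) from by
      rw [Real.rpow_neg hx'.le, div_eq_mul_inv]]
    rw [show -(s+1) = (2/α - 1) + (-(2:ℝ)) by rw [hs]; ring, Real.rpow_add hx']
    ring
  -- Step B : scaling x = v/b
  have stepB : (∫ x in Ioi (0:ℝ), Real.sin (b*x) ^ 2 * x ^ (-(s+1)))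
      = b ^ (2 - 2/α) * ∫ v in Ioi (0:ℝ), Real.sin v ^ 2 * v ^ (-(s+1)) := by
    have h2 := integral_comp_mul_left_Ioi (fun v => Real.sin v ^ 2 * v ^ (-(s+1))) 0 hb
    rw [mul_zero, smul_eq_mul] at h2
    have heq : ∀ x ∈ Ioi (0:ℝ), Real.sin (b*x) ^ 2 * (b*x) ^ (-(s+1))
        = b ^ (-(s+1)) * (Real.sin (b*x) ^ 2 * x ^ (-(s+1))) := by
      intro x hx
      rw [Real.mul_rpow hb.le (le_of_lt hx)]
      ring
    rw [setIntegral_congr_fun measurableSet_Ioi heq, integral_const_mul] at h2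
    have hbp : (0:ℝ) < b ^ (-(s+1)) := Real.rpow_pos_of_pos hb _
    have : (∫ x in Ioi (0:ℝ), Real.sin (b*x) ^ 2 * x ^ (-(s+1)))
        = (b ^ (-(s+1)))⁻¹ * (b⁻¹ * ∫ v in Ioi (0:ℝ), Real.sin v ^ 2 * v ^ (-(s+1))) := by
      rw [← h2, ← mul_assoc, inv_mul_cancel₀ hbp.ne', one_mul]
    rw [this, ← Real.rpow_neg_one b, ← Real.rpow_neg hb.le, ← mul_assoc,
      ← Real.rpow_add hb, show -(-(s+1)) + (-1) = 2 - 2/α by rw [hs]; ring]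
  -- Step C/D : sin² and doubling
  have stepCD : (∫ v in Ioi (0:ℝ), Real.sin v ^ 2 * v ^ (-(s+1)))
      = 2⁻¹ * ((2:ℝ) ^ (-(s+1)))⁻¹ * 2⁻¹ * I := by
    have h4 := integral_comp_mul_left_Ioi (fun w => (1 - Real.cos w) * w ^ (-(s+1))) 0
      (by norm_num : (0:ℝ) < 2)
    rw [mul_zero, smul_eq_mul] at h4
    have heq : ∀ v ∈ Ioi (0:ℝ), (1 - Real.cos (2*v)) * (2*v) ^ (-(s+1))
        = (2:ℝ) ^ (-(s+1)) * ((1 - Real.cos (2*v)) * v ^ (-(s+1))) := by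
      intro v hv
      rw [Real.mul_rpow (by norm_num) (le_of_lt hv)]
      ring
    rw [setIntegral_congr_fun measurableSet_Ioi heq, integral_const_mul] at h4
    -- h4 : 2^(-(s+1)) * ∫ v, (1-cos 2v) v^(-(s+1)) = 2⁻¹ * I
    have h2p : (0:ℝ) < (2:ℝ) ^ (-(s+1)) := Real.rpow_pos_of_pos (by norm_num) _
    have h5 : (∫ v in Ioi (0:ℝ), (1 - Real.cos (2*v)) * v ^ (-(s+1)))
        = ((2:ℝ) ^ (-(s+1)))⁻¹ * (2⁻¹ * I) := by
      rw [← h4, ← mul_assoc, inv_mul_cancel₀ h2p.ne', one_mul]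
    have heq2 : ∀ v ∈ Ioi (0:ℝ), Real.sin v ^ 2 * v ^ (-(s+1))
        = 2⁻¹ * ((1 - Real.cos (2*v)) * v ^ (-(s+1))) := by
      intro v hv
      rw [Real.sin_sq_eq_half_sub]
      ring
    rw [setIntegral_congr_fun measurableSet_Ioi heq2, integral_const_mul, h5]
    ring
  rw [stepA, integral_const_mul, stepB, stepCD, hIval]
  rw [show (2:ℝ) * (1/α - 1) = -s by rw [hs]; ring,
    show (2:ℝ) * (1 - 1/α) = s by rw [hs]; ring]
  rw [← Real.rpow_neg (by norm_num : (0:ℝ) ≤ 2), neg_neg,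
    Real.rpow_add (by norm_num : (0:ℝ) < 2), Real.rpow_one]
  ring
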